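/- Let X be a finite-dimensional normed space over ℝ or ℂ, let 1 ≤ p < ∞, and let {τ_j}_{j=1}^n and {ω_k}_{k=1}^m be Parseval p-frames for the dual X*. Set X*_τ := {f ∈ X* : f(τ_j) ≠ 0 for all 1≤j≤n} and X*_ω := {f ∈ X* : f(ω_k) ≠ 0 for all 1≤k≤m}. Then for every f ∈ X*_τ ∩ X*_ω, S_τ(f) + S_ω(f) ≥ -p · log( sup_{g ∈ X*_τ ∩ X*_ω, ‖g‖=1} max_{1≤j≤n, 1≤k≤m} |g(τ_j) g(ω_k)| ). -/

import Mathlib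

/-- Entropy lower bound: if `a` is a positive probability vector maximized at `j0`,
then the Shannon entropy is at least `-log (a j0)`. -/
lemma entropy_ge_neg_log_max {N : ℕ} (a : Fin N → ℝ) (j0 : Fin N)
    (hpos : ∀ j, 0 < a j) (hsum : ∑ j, a j = 1) (hmax : ∀ j, a j ≤ a j0) :
    -Real.log (a j0) ≤ -∑ j, a j * Real.log (a j) := by
  have h : ∑ j, a j * Real.log (a j) ≤ ∑ j, a j * Real.log (a j0) := by
    apply Finset.sum_le_sum
    intro j _
    exact mul_le_mul_of_nonneg_left (Real.log_le_log (hpos j) (hmax j)) (hpos j).le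
  have h2 : ∑ j, a j * Real.log (a j0) = Real.log (a j0) := by
    rw [← Finset.sum_mul, hsum, one_mul]
  linarith

theorem stmt_12 {𝕜 X : Type*} [RCLike 𝕜] [NormedAddCommGroup X] [NormedSpace 𝕜 X]
    [FiniteDimensional 𝕜 X] [Nontrivial X]
    (p : ℝ) (hp : 1 ≤ p) {n m : ℕ}
    (τ : Fin n → X) (ω : Fin m → X)
    (hτ : ∀ f : X →L[𝕜] 𝕜, ‖f‖ ^ p = ∑ j, ‖f (τ j)‖ ^ p)
    (hω : ∀ f : X →L[𝕜] 𝕜, ‖f‖ ^ p = ∑ k, ‖f (ω k)‖ ^ p)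
    (f : X →L[𝕜] 𝕜) (hfτ : ∀ j, f (τ j) ≠ 0) (hfω : ∀ k, f (ω k) ≠ 0) :
    (-∑ j, (‖f (τ j)‖ / ‖f‖) ^ p * Real.log ((‖f (τ j)‖ / ‖f‖) ^ p)) +
      (-∑ k, (‖f (ω k)‖ / ‖f‖) ^ p * Real.log ((‖f (ω k)‖ / ‖f‖) ^ p)) ≥
      -p * Real.log
        (⨆ g : {g : X →L[𝕜] 𝕜 // ‖g‖ = 1 ∧ (∀ j, g (τ j) ≠ 0) ∧ (∀ k, g (ω k) ≠ 0)},
          ⨆ j, ⨆ k, ‖(g : X →L[𝕜] 𝕜) (τ j)‖ * ‖(g : X →L[𝕜] 𝕜) (ω k)‖) := by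
  classical
  -- a nonzero functional exists
  obtain ⟨x0, hx0⟩ := exists_ne (0 : X)
  obtain ⟨g0, hg0, -⟩ := exists_dual_vector 𝕜 x0 (norm_ne_zero_iff.mpr hx0)
  -- n and m are nonzero
  have hn : Nonempty (Fin n) := by
    rcases Nat.eq_zero_or_pos n with h | h
    · exfalso
      have := hτ g0
      subst h
      simp [hg0, Real.one_rpow] at this
    · exact ⟨⟨0, h⟩⟩
  have hm : Nonempty (Fin m) := by
    rcases Nat.eq_zero_or_pos m with h | h
    · exfalso
      have := hω g0
      subst h
      simp [hg0, Real.one_rpow] at this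
    · exact ⟨⟨0, h⟩⟩
  have hf0 : f ≠ 0 := by
    intro h
    exact hfτ (Classical.arbitrary _) (by simp [h])
  have hF : (0:ℝ) < ‖f‖ := norm_pos_iff.mpr hf0
  have hFp : (0:ℝ) < ‖f‖ ^ p := Real.rpow_pos_of_pos hF p
  -- the normalized functional g
  set c : 𝕜 := ((‖f‖⁻¹ : ℝ) : 𝕜) with hc
  set g : X →L[𝕜] 𝕜 := c • f with hgdef
  have hgnorm : ∀ y : X, ‖g y‖ = ‖f y‖ / ‖f‖ := by
    intro y
    simp [hgdef, hc, norm_smul, RCLike.norm_ofReal, div_eq_inv_mul, abs_of_nonneg (inv_nonneg.mpr hF.le)]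
  have hg1 : ‖g‖ = 1 := by
    rw [hgdef, hc]
    rw [norm_smul (α := 𝕜) ((‖f‖⁻¹ : ℝ) : 𝕜) f, RCLike.norm_ofReal,
      abs_of_nonneg (inv_nonneg.mpr hF.le), inv_mul_cancel₀ hF.ne']
  have hgτ : ∀ j, g (τ j) ≠ 0 := by
    intro j
    simp only [hgdef, ContinuousLinearMap.smul_apply, smul_eq_mul, hc]
    exact mul_ne_zero (by simpa using hF.ne') (hfτ j)
  have hgω : ∀ k, g (ω k) ≠ 0 := by
    intro k
    simp only [hgdef, ContinuousLinearMap.smul_apply, smul_eq_mul, hc]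
    exact mul_ne_zero (by simpa using hF.ne') (hfω k)
  -- abbreviations
  set a : Fin n → ℝ := fun j => (‖f (τ j)‖ / ‖f‖) ^ p with ha
  set b : Fin m → ℝ := fun k => (‖f (ω k)‖ / ‖f‖) ^ p with hb
  have hapos : ∀ j, 0 < a j := fun j =>
    Real.rpow_pos_of_pos (div_pos (norm_pos_iff.mpr (hfτ j)) hF) p
  have hbpos : ∀ k, 0 < b k := fun k =>
    Real.rpow_pos_of_pos (div_pos (norm_pos_iff.mpr (hfω k)) hF) p
  have hasum : ∑ j, a j = 1 := by
    have : ∑ j, a j = (∑ j, ‖f (τ j)‖ ^ p) / ‖f‖ ^ p := by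
      rw [Finset.sum_div]
      exact Finset.sum_congr rfl fun j _ =>
        Real.div_rpow (norm_nonneg _) (norm_nonneg _) p
    rw [this, ← hτ f, div_self hFp.ne']
  have hbsum : ∑ k, b k = 1 := by
    have : ∑ k, b k = (∑ k, ‖f (ω k)‖ ^ p) / ‖f‖ ^ p := by
      rw [Finset.sum_div]
      exact Finset.sum_congr rfl fun k _ =>
        Real.div_rpow (norm_nonneg _) (norm_nonneg _) p
    rw [this, ← hω f, div_self hFp.ne']
  -- argmaxes
  obtain ⟨j0, hj0⟩ := Finite.exists_max fun j => ‖f (τ j)‖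
  obtain ⟨k0, hk0⟩ := Finite.exists_max fun k => ‖f (ω k)‖
  have haj0 : ∀ j, a j ≤ a j0 := by
    intro j
    have h : ‖f (τ j)‖ / ‖f‖ ≤ ‖f (τ j0)‖ / ‖f‖ := by
      rw [div_eq_mul_inv, div_eq_mul_inv]
      exact mul_le_mul_of_nonneg_right (hj0 j) (inv_nonneg.mpr hF.le)
    exact Real.rpow_le_rpow (div_nonneg (norm_nonneg _) (norm_nonneg _)) h
      (le_trans zero_le_one hp)
  have hbk0 : ∀ k, b k ≤ b k0 := by
    intro k
    have h : ‖f (ω k)‖ / ‖f‖ ≤ ‖f (ω k0)‖ / ‖f‖ := by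
      rw [div_eq_mul_inv, div_eq_mul_inv]
      exact mul_le_mul_of_nonneg_right (hk0 k) (inv_nonneg.mpr hF.le)
    exact Real.rpow_le_rpow (div_nonneg (norm_nonneg _) (norm_nonneg _)) h
      (le_trans zero_le_one hp)
  -- the specific element of the subtype
  set G : {g : X →L[𝕜] 𝕜 // ‖g‖ = 1 ∧ (∀ j, g (τ j) ≠ 0) ∧ (∀ k, g (ω k) ≠ 0)} :=
    ⟨g, hg1, hgτ, hgω⟩ with hG
  set S := ⨆ g : {g : X →L[𝕜] 𝕜 // ‖g‖ = 1 ∧ (∀ j, g (τ j) ≠ 0) ∧ (∀ k, g (ω k) ≠ 0)},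
      ⨆ j, ⨆ k, ‖(g : X →L[𝕜] 𝕜) (τ j)‖ * ‖(g : X →L[𝕜] 𝕜) (ω k)‖ with hSdef
  -- boundedness of the outer sup
  have hbB : BddAbove (Set.range fun g' :
      {g : X →L[𝕜] 𝕜 // ‖g‖ = 1 ∧ (∀ j, g (τ j) ≠ 0) ∧ (∀ k, g (ω k) ≠ 0)} =>
      ⨆ j, ⨆ k, ‖(g' : X →L[𝕜] 𝕜) (τ j)‖ * ‖(g' : X →L[𝕜] 𝕜) (ω k)‖) := by
    refine ⟨(⨆ j, ‖τ j‖) * (⨆ k, ‖ω k‖), ?_⟩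
    rintro _ ⟨g', rfl⟩
    apply ciSup_le
    intro j
    apply ciSup_le
    intro k
    have h1 : ‖(g' : X →L[𝕜] 𝕜) (τ j)‖ ≤ ‖τ j‖ := by
      simpa [g'.2.1] using (g' : X →L[𝕜] 𝕜).le_opNorm (τ j)
    have h2 : ‖(g' : X →L[𝕜] 𝕜) (ω k)‖ ≤ ‖ω k‖ := by
      simpa [g'.2.1] using (g' : X →L[𝕜] 𝕜).le_opNorm (ω k)
    have h3 : ‖τ j‖ ≤ ⨆ j, ‖τ j‖ :=
      le_ciSup (f := fun j => ‖τ j‖) (Set.Finite.bddAbove (Set.finite_range _)) j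
    have h4 : ‖ω k‖ ≤ ⨆ k, ‖ω k‖ :=
      le_ciSup (f := fun k => ‖ω k‖) (Set.Finite.bddAbove (Set.finite_range _)) k
    exact mul_le_mul (h1.trans h3) (h2.trans h4) (norm_nonneg _)
      (le_trans (norm_nonneg _) h3)
  -- the product at the argmax is below S
  have hPS : ‖g (τ j0)‖ * ‖g (ω k0)‖ ≤ S := by
    have step1 : ‖g (τ j0)‖ * ‖g (ω k0)‖ ≤ ⨆ k, ‖g (τ j0)‖ * ‖g (ω k)‖ :=
      le_ciSup (f := fun k => ‖g (τ j0)‖ * ‖g (ω k)‖)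
        (Set.Finite.bddAbove (Set.finite_range _)) k0
    have step2 : (⨆ k, ‖g (τ j0)‖ * ‖g (ω k)‖) ≤
        ⨆ j, ⨆ k, ‖g (τ j)‖ * ‖g (ω k)‖ :=
      le_ciSup (f := fun j => ⨆ k, ‖g (τ j)‖ * ‖g (ω k)‖)
        (Set.Finite.bddAbove (Set.finite_range _)) j0
    have step3 : (⨆ j, ⨆ k, ‖g (τ j)‖ * ‖g (ω k)‖) ≤ S := le_ciSup hbB G
    exact (step1.trans step2).trans step3
  have hPpos : 0 < ‖g (τ j0)‖ * ‖g (ω k0)‖ :=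
    mul_pos (norm_pos_iff.mpr (hgτ j0)) (norm_pos_iff.mpr (hgω k0))
  -- compare logs
  have hlog : Real.log (‖g (τ j0)‖ * ‖g (ω k0)‖) ≤ Real.log S :=
    Real.log_le_log hPpos hPS
  have hp0 : (0:ℝ) ≤ p := le_trans zero_le_one hp
  have hmono : -p * Real.log S ≤ -p * Real.log (‖g (τ j0)‖ * ‖g (ω k0)‖) := by
    have := mul_le_mul_of_nonneg_left hlog hp0
    linarith
  -- rewrite -p log(product) as sum of -log of the a, b values
  have hxj : ‖g (τ j0)‖ = ‖f (τ j0)‖ / ‖f‖ := hgnorm _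
  have hyk : ‖g (ω k0)‖ = ‖f (ω k0)‖ / ‖f‖ := hgnorm _
  have hxpos : 0 < ‖f (τ j0)‖ / ‖f‖ := div_pos (norm_pos_iff.mpr (hfτ j0)) hF
  have hypos : 0 < ‖f (ω k0)‖ / ‖f‖ := div_pos (norm_pos_iff.mpr (hfω k0)) hF
  have hsplit : -p * Real.log (‖g (τ j0)‖ * ‖g (ω k0)‖)
      = -Real.log (a j0) + -Real.log (b k0) := by
    rw [hxj, hyk, Real.log_mul hxpos.ne' hypos.ne', ha, hb]
    simp only [Real.log_rpow hxpos, Real.log_rpow hypos]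
    ring
  -- entropy bounds
  have hEτ : -Real.log (a j0) ≤ -∑ j, a j * Real.log (a j) :=
    entropy_ge_neg_log_max a j0 hapos hasum haj0
  have hEω : -Real.log (b k0) ≤ -∑ k, b k * Real.log (b k) :=
    entropy_ge_neg_log_max b k0 hbpos hbsum hbk0
  calc -p * Real.log S ≤ -p * Real.log (‖g (τ j0)‖ * ‖g (ω k0)‖) := hmono
    _ = -Real.log (a j0) + -Real.log (b k0) := hsplit
    _ ≤ (-∑ j, a j * Real.log (a j)) + (-∑ k, b k * Real.log (b k)) :=
        add_le_add hEτ hEω
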